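/- Let N and k be integers with 0 < k < N, and let d = gcd(k, N). Then N/d is the minimal positive period of the descent indicator function D : ℤ → Prop, D(i) := ((k·(i-1)) mod N > (k·i) mod N); that is, N/d is the least element of the set of positive integers p such that for all integers i, D(i + p) ↔ D(i). -/

import Mathlib

/-- One step of the Euclidean residue sequence. -/
private lemma eucl_step (N k : ℤ) (hk : 0 < k) (hkN : k < N) (i : ℤ) :
    (k * i) % N = ((k * (i - 1)) % N + k) % N := by
  have h : k * i = k * (i - 1) + k := by ring
  rw [h, Int.add_emod, Int.emod_eq_of_lt hk.le hkN]

/-- A descent happens at `i` iff the residue at `i` is less than `k`. -/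
private lemma descent_iff (N k : ℤ) (hk : 0 < k) (hkN : k < N) (i : ℤ) :
    ((k * (i - 1)) % N > (k * i) % N) ↔ (k * i) % N < k := by
  have hN : 0 < N := hk.trans hkN
  have ha : 0 ≤ (k * (i - 1)) % N := Int.emod_nonneg _ hN.ne'
  have ha' : (k * (i - 1)) % N < N := Int.emod_lt_of_pos _ hN
  have hstep := eucl_step N k hk hkN i
  set a := (k * (i - 1)) % N with ha_def
  rcases lt_or_ge (a + k) N with h | h
  · rw [hstep, Int.emod_eq_of_lt (by omega) h]
    omega
  · have h2 : (a + k) % N = (a + k - N) % N := by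
      rw [show a + k - N = a + k + N * (-1) by ring, Int.add_mul_emod_self_left]
    rw [hstep, h2, Int.emod_eq_of_lt (by omega) (by omega)]
    omega

/-- If `t` is a period of the indicator, so is `t * m` for every integer `m`. -/
private lemma per_mul (N k t : ℤ)
    (h : ∀ i : ℤ, (k * (i + t)) % N < k ↔ (k * i) % N < k) (m : ℤ) :
    ∀ i : ℤ, (k * (i + t * m)) % N < k ↔ (k * i) % N < k := by
  induction m using Int.induction_on with
  | zero => simp
  | succ n ih =>
    intro i
    rw [show i + t * ((n : ℤ) + 1) = (i + t * (n : ℤ)) + t by ring, h (i + t * (n : ℤ))]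
    exact ih i
  | pred n ih =>
    intro i
    have h1 : (k * (i + t * (-(n : ℤ)))) % N < k ↔ (k * (i + t * (-(n : ℤ) - 1))) % N < k := by
      rw [show i + t * (-(n : ℤ)) = (i + t * (-(n : ℤ) - 1)) + t by ring]
      exact h _
    exact h1.symm.trans (ih i)

theorem euclidean_rhythm_minimal_period (N k : ℤ) (hk : 0 < k) (hkN : k < N)
    (d : ℤ) (hd : d = Int.gcd k N) :
    IsLeast {p : ℤ | 0 < p ∧ ∀ i : ℤ,
        ((k * (i + p - 1)) % N > (k * (i + p)) % N) ↔ ((k * (i - 1)) % N > (k * i) % N)}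
      (N / d) := by
  have hN : 0 < N := hk.trans hkN
  have hgpos : 0 < Int.gcd k N := Int.gcd_pos_iff.mpr (Or.inl hk.ne')
  have hd0 : 0 < d := by rw [hd]; exact_mod_cast hgpos
  have hdk : d ∣ k := hd ▸ Int.gcd_dvd_left k N
  have hdN : d ∣ N := hd ▸ Int.gcd_dvd_right k N
  set q := N / d with hq_def
  have hdq : d * q = N := Int.mul_ediv_cancel' hdN
  have hq0 : 0 < q := by nlinarith
  have hkdd : d * (k / d) = k := Int.mul_ediv_cancel' hdk
  have hkd : k * q = N * (k / d) := by
    rw [← hdq, mul_comm d q, mul_assoc, hkdd]; ring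
  have hDE : ∀ i : ℤ, (((k * (i - 1)) % N > (k * i) % N) ↔ (k * i) % N < k) :=
    descent_iff N k hk hkN
  have hkq : ∀ i : ℤ, (k * (i + q)) % N = (k * i) % N := by
    intro i
    rw [show k * (i + q) = k * i + N * (k / d) by rw [← hkd]; ring,
      Int.add_mul_emod_self_left]
  constructor
  · refine ⟨hq0, fun i => ?_⟩
    have e1 : (k * (i + q)) % N = (k * i) % N := hkq i
    have e2 : (k * (i + q - 1)) % N = (k * (i - 1)) % N := by
      rw [show i + q - 1 = (i - 1) + q by ring]; exact hkq (i - 1)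
    rw [e1, e2]
  · rintro p ⟨hp0, hper⟩
    have hperE : ∀ i : ℤ, (k * (i + p)) % N < k ↔ (k * i) % N < k := by
      intro i
      have h1 := hper i
      have h2 := hDE (i + p)
      have h3 := hDE i
      rw [show i + p - 1 = (i + p) - 1 by ring] at h1
      tauto
    have hperEq : ∀ i : ℤ, (k * (i + q)) % N < k ↔ (k * i) % N < k := fun i => by
      rw [hkq i]
    set r : ℤ := (Int.gcd p q : ℤ) with hr_def
    have hr0 : 0 < r := by
      have h : 0 < Int.gcd p q := Int.gcd_pos_iff.mpr (Or.inl hp0.ne')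
      rw [hr_def]
      exact_mod_cast h
    have hrp : r ∣ p := Int.gcd_dvd_left p q
    have hrq : r ∣ q := Int.gcd_dvd_right p q
    have hperR : ∀ i : ℤ, (k * (i + r)) % N < k ↔ (k * i) % N < k := by
      intro i
      have h1 := per_mul N k p hperE (Int.gcdA p q)
      have h2 := per_mul N k q hperEq (Int.gcdB p q)
      have hb : i + r = (i + q * Int.gcdB p q) + p * Int.gcdA p q := by
        rw [hr_def, Int.gcd_eq_gcd_ab p q]; ring
      rw [hb, h1, h2]
    set s : ℤ := q / r with hs_def
    have hrs : r * s = q := Int.mul_ediv_cancel' hrq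
    have hs0 : 0 < s := by nlinarith
    have hperRm : ∀ m : ℤ, ∀ i : ℤ, (k * (i + r * m)) % N < k ↔ (k * i) % N < k :=
      fun m => per_mul N k r hperR m
    -- the two finsets of descent positions
    set F : Finset ℤ := (Finset.Ico (0 : ℤ) q).filter (fun i => (k * i) % N < k) with hF
    set Fr : Finset ℤ := (Finset.Ico (0 : ℤ) r).filter (fun i => (k * i) % N < k) with hFr
    -- Claim 2: F.card = Fr.card * s.toNat via splitting i = i % r + r * (i / r)
    have hsplit : F.card = (Fr ×ˢ Finset.Ico (0 : ℤ) s).card := by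
      apply Finset.card_nbij' (fun i => (i % r, i / r)) (fun x => x.1 + r * x.2)
      · intro a ha
        simp only [hF, hFr, Finset.mem_coe, Finset.mem_filter, Finset.mem_Ico, Finset.mem_product] at ha ⊢
        obtain ⟨⟨h0, h1⟩, hE⟩ := ha
        have hmod := hperRm (a / r) (a % r)
        rw [show a % r + r * (a / r) = a from Int.emod_add_mul_ediv a r] at hmod
        refine ⟨⟨⟨Int.emod_nonneg a hr0.ne', Int.emod_lt_of_pos a hr0⟩, hmod.mp hE⟩,
          Int.ediv_nonneg h0 hr0.le, ?_⟩
        rw [Int.ediv_lt_iff_lt_mul hr0]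
        nlinarith
      · intro x hx
        simp only [hF, hFr, Finset.mem_coe, Finset.mem_filter, Finset.mem_Ico, Finset.mem_product] at hx ⊢
        obtain ⟨⟨⟨h0, h1⟩, hE⟩, h2, h3⟩ := hx
        refine ⟨⟨by nlinarith, by nlinarith⟩, (hperRm x.2 x.1).mpr hE⟩
      · intro a _
        exact Int.emod_add_mul_ediv a r
      · intro x hx
        simp only [hFr, Finset.mem_coe, Finset.mem_filter, Finset.mem_Ico, Finset.mem_product] at hx
        obtain ⟨⟨⟨h0, h1⟩, _⟩, _, _⟩ := hx
        have e1 : (x.1 + r * x.2) % r = x.1 := by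
          rw [Int.add_mul_emod_self_left, Int.emod_eq_of_lt h0 h1]
        have e2 : (x.1 + r * x.2) / r = x.2 := by
          rw [Int.add_mul_ediv_left _ _ hr0.ne', Int.ediv_eq_zero_of_lt h0 h1, zero_add]
        exact Prod.ext e1 e2
    have hFcard : F.card = Fr.card * s.toNat := by
      rw [hsplit, Finset.card_product, Int.card_Ico, sub_zero]
    -- Claim 1: F.card = (k/d).toNat via the bijection i ↦ (k*i % N)/d
    have hcop : Int.gcd (k / d) q = 1 := by
      rw [hq_def, hd]; exact Int.gcd_div_gcd_div_gcd hgpos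
    set u : ℤ := Int.gcdA (k / d) q with hu_def
    set v : ℤ := Int.gcdB (k / d) q with hv_def
    have hbez : (k / d) * u + q * v = 1 := by
      have h := Int.gcd_eq_gcd_ab (k / d) q
      rw [hcop] at h
      exact_mod_cast h.symm
    have P1 : ∀ j : ℤ, (k * ((j * u) % q)) % N = (d * j) % N := by
      intro j
      rw [Int.emod_def (j * u) q]
      have e1 : k * (j * u - q * ((j * u) / q))
          = d * j + N * (-(v * j) - (k / d) * ((j * u) / q)) := by
        linear_combination (-(j * u) + q * ((j * u) / q)) * hkdd + (d * j) * hbez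
          + (-(v * j) - (k / d) * ((j * u) / q)) * hdq
      rw [e1, Int.add_mul_emod_self_left]
    have hcard1 : F.card = (Finset.Ico (0 : ℤ) (k / d)).card := by
      apply Finset.card_nbij' (fun i => ((k * i) % N) / d) (fun j => (j * u) % q)
      · -- maps into Ico 0 (k/d)
        intro i hi
        simp only [hF, Finset.mem_coe, Finset.mem_filter, Finset.mem_Ico] at hi ⊢
        obtain ⟨⟨h0, h1⟩, hE⟩ := hi
        have hx : (k * i) % N = d * ((k / d) * i - q * (k * i / N)) := by
          rw [Int.emod_def]
          linear_combination (-i) * hkdd + (k * i / N) * hdq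
        have hxd : (k * i) % N / d = (k / d) * i - q * (k * i / N) := by
          rw [hx, Int.mul_ediv_cancel_left _ hd0.ne']
        constructor
        · exact Int.ediv_nonneg (Int.emod_nonneg _ hN.ne') hd0.le
        · rw [hxd]
          have : d * ((k / d) * i - q * (k * i / N)) < d * (k / d) := by
            rw [← hx, hkdd]; exact hE
          exact lt_of_mul_lt_mul_left this hd0.le
      · -- maps back into F
        intro j hj
        simp only [hF, Finset.mem_coe, Finset.mem_filter, Finset.mem_Ico] at hj ⊢
        obtain ⟨h0, h1⟩ := hj
        have hdj : 0 ≤ d * j ∧ d * j < k := by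
          constructor
          · positivity
          · calc d * j < d * (k / d) := by exact mul_lt_mul_of_pos_left h1 hd0
              _ = k := hkdd
        refine ⟨⟨Int.emod_nonneg _ hq0.ne', Int.emod_lt_of_pos _ hq0⟩, ?_⟩
        rw [P1 j, Int.emod_eq_of_lt hdj.1 (hdj.2.trans hkN)]
        exact hdj.2
      · -- left inverse
        intro i hi
        simp only [hF, Finset.mem_coe, Finset.mem_filter, Finset.mem_Ico] at hi
        obtain ⟨⟨h0, h1⟩, hE⟩ := hi
        have hx : (k * i) % N = d * ((k / d) * i - q * (k * i / N)) := by
          rw [Int.emod_def]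
          linear_combination (-i) * hkdd + (k * i / N) * hdq
        have hxd : (k * i) % N / d = (k / d) * i - q * (k * i / N) := by
          rw [hx, Int.mul_ediv_cancel_left _ hd0.ne']
        have e1 : ((k * i) % N / d) * u = i + q * (-(v * i) - u * (k * i / N)) := by
          rw [hxd]
          linear_combination i * hbez
        beta_reduce
        rw [e1, Int.add_mul_emod_self_left, Int.emod_eq_of_lt h0 h1]
      · -- right inverse
        intro j hj
        simp only [Finset.mem_coe, Finset.mem_Ico] at hj
        obtain ⟨h0, h1⟩ := hj
        have hdj : 0 ≤ d * j ∧ d * j < k := by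
          constructor
          · positivity
          · calc d * j < d * (k / d) := by exact mul_lt_mul_of_pos_left h1 hd0
              _ = k := hkdd
        beta_reduce
        rw [P1 j, Int.emod_eq_of_lt hdj.1 (hdj.2.trans hkN), Int.mul_ediv_cancel_left _ hd0.ne']
    have hkd_nonneg : 0 ≤ k / d := Int.ediv_nonneg hk.le hd0.le
    have hkdval : ((k / d).toNat : ℤ) = k / d := Int.toNat_of_nonneg hkd_nonneg
    have hcards : (k / d).toNat = Fr.card * s.toNat := by
      rw [← hFcard, hcard1, Int.card_Ico, sub_zero]
    have hsdvd : s ∣ k / d := by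
      refine ⟨(Fr.card : ℤ), ?_⟩
      have := congrArg (fun n : ℕ => (n : ℤ)) hcards
      push_cast at this
      rw [Int.toNat_of_nonneg hkd_nonneg, Int.toNat_of_nonneg hs0.le] at this
      linarith
    have hsdvd2 : s ∣ q := ⟨r, by rw [← hrs]; ring⟩
    have hs1 : s = 1 := by
      have hdg : s ∣ ((Int.gcd (k / d) q : ℤ)) := Int.dvd_coe_gcd hsdvd hsdvd2
      rw [hcop] at hdg
      have := Int.le_of_dvd one_pos (by exact_mod_cast hdg)
      omega
    have hrq' : r = q := by rw [← hrs, hs1, mul_one]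
    have hqp : q ∣ p := hrq' ▸ hrp
    exact Int.le_of_dvd hp0 hqp
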